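/- Let (X_i, Y_i), i = 1,...,n be i.i.d. pairs from a finite joint distribution P with conditional entropy H(Y|X). Suppose a sequence of set-valued predictors Γ_n ⊆ Y^n satisfies P((Y_1,...,Y_n) ∉ Γ_n(X_1,...,X_n)) ≤ α_n with liminf_{n→∞}(1 − α_n) > 0. Then liminf_{n→∞} (1/n)·log E[|Γ_n(X_1,...,X_n)|] ≥ H(Y|X). -/

import Mathlib

open Finset Filter Real

private lemma expect_prod_aux {A : Type*} [Fintype A] {n : ℕ} (c : Fin n → A → ℝ) :
    ∑ f : Fin n → A, ∏ i, c i (f i) = ∏ i, ∑ a, c i a := by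
  classical
  rw [Finset.prod_univ_sum]
  simp

private lemma expect_pair {A : Type*} [Fintype A] {n : ℕ} (w u v : A → ℝ)
    (hw1 : ∑ a, w a = 1) (i j : Fin n) (hij : i ≠ j) :
    ∑ f : Fin n → A, (∏ k, w (f k)) * u (f i) * v (f j)
      = (∑ a, w a * u a) * (∑ a, w a * v a) := by
  classical
  have h := expect_prod_aux (n := n)
    (fun k a => w a * (if k = i then u a else 1) * (if k = j then v a else 1))
  have hL : ∀ f : Fin n → A,
      (∏ k, w (f k) * (if k = i then u (f k) else 1) * (if k = j then v (f k) else 1))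
        = (∏ k, w (f k)) * u (f i) * v (f j) := by
    intro f
    rw [Finset.prod_mul_distrib, Finset.prod_mul_distrib]
    congr 1
    · congr 1
      simp [Finset.prod_ite_eq' Finset.univ i (fun k => u (f k))]
    · simp [Finset.prod_ite_eq' Finset.univ j (fun k => v (f k))]
  rw [Finset.sum_congr rfl (fun f _ => hL f)] at h
  rw [h]
  have hR : ∀ k : Fin n,
      (∑ a, w a * (if k = i then u a else 1) * (if k = j then v a else 1))
        = (if k = i then (∑ a, w a * u a) else 1) * (if k = j then (∑ a, w a * v a) else 1) := by
    intro k
    rcases eq_or_ne k i with rfl | hki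
    · simp [hij, mul_comm]
    · rcases eq_or_ne k j with rfl | hkj
      · simp [hki, hw1]
      · simp [hki, hkj, hw1]
  rw [Finset.prod_congr rfl (fun k _ => hR k), Finset.prod_mul_distrib]
  simp [Finset.prod_ite_eq' Finset.univ i (fun _ => ∑ a, w a * u a),
        Finset.prod_ite_eq' Finset.univ j (fun _ => ∑ a, w a * v a)]

private lemma expect_single {A : Type*} [Fintype A] {n : ℕ} (w u : A → ℝ)
    (hw1 : ∑ a, w a = 1) (i : Fin n) :
    ∑ f : Fin n → A, (∏ k, w (f k)) * u (f i) = ∑ a, w a * u a := by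
  classical
  have h := expect_prod_aux (n := n) (fun k a => w a * (if k = i then u a else 1))
  have hL : ∀ f : Fin n → A,
      (∏ k, w (f k) * (if k = i then u (f k) else 1)) = (∏ k, w (f k)) * u (f i) := by
    intro f
    rw [Finset.prod_mul_distrib]
    congr 1
    simp [Finset.prod_ite_eq' Finset.univ i (fun k => u (f k))]
  rw [Finset.sum_congr rfl (fun f _ => hL f)] at h
  rw [h]
  have hR : ∀ k : Fin n,
      (∑ a, w a * (if k = i then u a else 1)) = (if k = i then (∑ a, w a * u a) else 1) := by
    intro k
    rcases eq_or_ne k i with rfl | hki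
    · simp
    · simp [hki, hw1]
  rw [Finset.prod_congr rfl (fun k _ => hR k)]
  simp [Finset.prod_ite_eq' Finset.univ i (fun _ => ∑ a, w a * u a)]

private lemma variance_sum {A : Type*} [Fintype A] {n : ℕ} (w g : A → ℝ)
    (hw1 : ∑ a, w a = 1) (hg0 : ∑ a, w a * g a = 0) :
    ∑ f : Fin n → A, (∏ k, w (f k)) * (∑ i, g (f i))^2
      = n * ∑ a, w a * (g a)^2 := by
  classical
  have hexp : ∀ f : Fin n → A,
      (∏ k, w (f k)) * (∑ i, g (f i))^2
        = ∑ i, ∑ j, (∏ k, w (f k)) * g (f i) * g (f j) := by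
    intro f
    rw [sq, Finset.sum_mul_sum, Finset.mul_sum]
    refine Finset.sum_congr rfl fun i _ => ?_
    rw [Finset.mul_sum]
    exact Finset.sum_congr rfl fun j _ => by ring
  have key : ∀ i j : Fin n,
      (∑ f : Fin n → A, (∏ k, w (f k)) * g (f i) * g (f j))
        = if j = i then (∑ a, w a * (g a)^2) else 0 := by
    intro i j
    rcases eq_or_ne j i with rfl | hji
    · rw [if_pos rfl]
      have h2 := expect_single w (fun a => (g a)^2) hw1 (n := n) j
      calc (∑ f : Fin n → A, (∏ k, w (f k)) * g (f j) * g (f j))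
          = ∑ f : Fin n → A, (∏ k, w (f k)) * (g (f j))^2 :=
            Finset.sum_congr rfl fun f _ => by ring
        _ = ∑ a, w a * (g a)^2 := h2
    · rw [if_neg hji, expect_pair w g g hw1 i j (Ne.symm hji), hg0]
      ring
  calc ∑ f : Fin n → A, (∏ k, w (f k)) * (∑ i, g (f i))^2
      = ∑ f : Fin n → A, ∑ i, ∑ j, (∏ k, w (f k)) * g (f i) * g (f j) :=
        Finset.sum_congr rfl fun f _ => hexp f
    _ = ∑ i, ∑ f : Fin n → A, ∑ j, (∏ k, w (f k)) * g (f i) * g (f j) :=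
        Finset.sum_comm
    _ = ∑ i, ∑ j, ∑ f : Fin n → A, (∏ k, w (f k)) * g (f i) * g (f j) :=
        Finset.sum_congr rfl fun i _ => Finset.sum_comm
    _ = ∑ i : Fin n, ∑ j : Fin n, (if j = i then (∑ a, w a * (g a)^2) else 0) :=
        Finset.sum_congr rfl fun i _ => Finset.sum_congr rfl fun j _ => key i j
    _ = ∑ i : Fin n, (∑ a, w a * (g a)^2) := by
        refine Finset.sum_congr rfl fun i _ => ?_
        simp
    _ = n * ∑ a, w a * (g a)^2 := by
        rw [Finset.sum_const, Finset.card_univ, Fintype.card_fin, nsmul_eq_mul]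

private lemma chebyshev_sum {A : Type*} [Fintype A] {n : ℕ} (w g : A → ℝ)
    (hw : ∀ a, 0 ≤ w a) (hw1 : ∑ a, w a = 1) (hg0 : ∑ a, w a * g a = 0)
    (t : ℝ) (ht : 0 < t) :
    ∑ f : Fin n → A, (∏ k, w (f k)) * (if (∑ i, g (f i)) ≤ -t then 1 else 0)
      ≤ n * (∑ a, w a * (g a)^2) / t^2 := by
  classical
  have hpt : ∀ f : Fin n → A,
      (∏ k, w (f k)) * (if (∑ i, g (f i)) ≤ -t then 1 else 0)
        ≤ (∏ k, w (f k)) * ((∑ i, g (f i))^2 / t^2) := by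
    intro f
    have hwnn : 0 ≤ ∏ k, w (f k) := Finset.prod_nonneg fun k _ => hw (f k)
    split_ifs with h
    · refine mul_le_mul_of_nonneg_left ?_ hwnn
      rw [le_div_iff₀ (by positivity), one_mul]
      nlinarith [mul_le_mul_of_nonneg_right h (le_of_lt ht), sq_nonneg ((∑ i, g (f i)) + t)]
    · have : 0 ≤ (∑ i, g (f i))^2 / t^2 := by positivity
      nlinarith
  calc ∑ f : Fin n → A, (∏ k, w (f k)) * (if (∑ i, g (f i)) ≤ -t then 1 else 0)
      ≤ ∑ f : Fin n → A, (∏ k, w (f k)) * ((∑ i, g (f i))^2 / t^2) :=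
        Finset.sum_le_sum fun f _ => hpt f
    _ = (∑ f : Fin n → A, (∏ k, w (f k)) * (∑ i, g (f i))^2) / t^2 := by
        rw [Finset.sum_div]
        exact Finset.sum_congr rfl fun f _ => by ring
    _ = n * (∑ a, w a * (g a)^2) / t^2 := by rw [variance_sum w g hw1 hg0]

/-- For i.i.d. pairs `(X_i,Y_i) ~ P` on finite alphabets, if a sequence
of set-valued predictors `Γ n : X^n → 2^{Y^n}` has coverage probability
`cov n = P((Y_1,…,Y_n) ∈ Γ n (X_1,…,X_n))` with `liminf_n cov n > 0` (non-trivial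
asymptotic confidence), then
`liminf_n (1/n)·log E[|Γ n (X_1,…,X_n)|] ≥ H(Y|X)`,
where `H(Y|X) = -∑_{x,y} P(x,y) log (P(x,y)/P(x))`. -/
theorem efficiency_rate_ge_conditional_entropy
    {X Y : Type*} [Fintype X] [Fintype Y] [DecidableEq Y]
    (P : X → Y → ℝ) (hPnonneg : ∀ x y, 0 ≤ P x y)
    (hPsum : ∑ x, ∑ y, P x y = 1)
    (Γ : (n : ℕ) → ((Fin n → X) → Finset (Fin n → Y)))
    (cov : ℕ → ℝ)
    (hcov : ∀ n, cov n = ∑ xs : Fin n → X, ∑ ys : Fin n → Y,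
        (∏ i, P (xs i) (ys i)) * (if ys ∈ Γ n xs then 1 else 0))
    (hconf : 0 < Filter.liminf (fun n => cov n) Filter.atTop) :
    (-∑ x, ∑ y, P x y * Real.log (P x y / ∑ y', P x y')) ≤
      Filter.liminf (fun n =>
        Real.log (∑ xs : Fin n → X,
          (∏ i, ∑ y, P (xs i) y) * (((Γ n xs).card : ℝ))) / n) Filter.atTop := by
  classical
  -- abbreviations
  set q : X → ℝ := fun x => ∑ y, P x y with hqd
  set Z : X → Y → ℝ := fun x y => -Real.log (P x y / q x) with hZd
  set H : ℝ := ∑ x, ∑ y, P x y * Z x y with hHd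
  set w : X × Y → ℝ := fun a => P a.1 a.2 with hwd
  set g : X × Y → ℝ := fun a => Z a.1 a.2 - H with hgd
  set σ2 : ℝ := ∑ a : X × Y, w a * (g a)^2 with hσd
  set E : ℕ → ℝ := fun n => ∑ xs : Fin n → X, (∏ i, q (xs i)) * ((Γ n xs).card : ℝ) with hEd
  set T : ℕ → ℝ := fun n => Real.log (E n) / n with hTd
  -- the goal is about H and T
  have hq0 : ∀ x, 0 ≤ q x := fun x => Finset.sum_nonneg fun y _ => hPnonneg x y
  have hgoalL : (-∑ x, ∑ y, P x y * Real.log (P x y / ∑ y', P x y')) = H := by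
    rw [hHd, ← Finset.sum_neg_distrib]
    refine Finset.sum_congr rfl fun x _ => ?_
    rw [← Finset.sum_neg_distrib]
    refine Finset.sum_congr rfl fun y _ => ?_
    rw [hZd, hqd]
    ring
  rw [hgoalL]
  -- basic facts
  have hw0 : ∀ a : X × Y, 0 ≤ w a := fun a => hPnonneg a.1 a.2
  have hw1 : ∑ a : X × Y, w a = 1 := by
    rw [Fintype.sum_prod_type]; exact hPsum
  have hZsum : ∑ a : X × Y, w a * Z a.1 a.2 = H := by
    rw [Fintype.sum_prod_type, hHd]
  have hg0 : ∑ a : X × Y, w a * g a = 0 := by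
    have : ∑ a : X × Y, w a * g a
        = (∑ a : X × Y, w a * Z a.1 a.2) - (∑ a : X × Y, w a) * H := by
      rw [Finset.sum_mul, ← Finset.sum_sub_distrib]
      refine Finset.sum_congr rfl fun a _ => ?_
      rw [hgd]; ring
    rw [this, hZsum, hw1, one_mul, sub_self]
  have hσ2nn : 0 ≤ σ2 := Finset.sum_nonneg fun a _ =>
    mul_nonneg (hw0 a) (sq_nonneg _)
  -- bridge between double sums and product sums
  have bridge : ∀ (n : ℕ) (G : (Fin n → X) → (Fin n → Y) → ℝ),
      ∑ xs : Fin n → X, ∑ ys : Fin n → Y, G xs ys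
        = ∑ f : Fin n → X × Y, G (fun i => (f i).1) (fun i => (f i).2) := by
    intro n G
    have h1 : ∑ f : Fin n → X × Y, G (fun i => (f i).1) (fun i => (f i).2)
        = ∑ p : (Fin n → X) × (Fin n → Y), G p.1 p.2 :=
      (Fintype.sum_equiv (Equiv.arrowProdEquivProdArrow (Fin n) (fun _ => X) (fun _ => Y)).symm
        (fun p => G p.1 p.2) (fun f => G (fun i => (f i).1) (fun i => (f i).2))
        (fun p => rfl)).symm
    rw [h1, Fintype.sum_prod_type]
  -- per-coordinate bound
  have hPq : ∀ x y, P x y ≤ q x * Real.exp (-(Z x y)) := by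
    intro x y
    rcases eq_or_lt_of_le (hPnonneg x y) with h0 | hpos
    · rw [← h0, hZd]
      simp only [← h0]
      rw [zero_div, Real.log_zero, neg_zero, neg_zero, Real.exp_zero, mul_one]
      exact hq0 x
    · have hqpos : 0 < q x := lt_of_lt_of_le hpos
        (Finset.single_le_sum (fun y _ => hPnonneg x y) (Finset.mem_univ y))
      rw [hZd, neg_neg, Real.exp_log (div_pos hpos hqpos), mul_comm,
        div_mul_cancel₀ _ (ne_of_gt hqpos)]
  -- product bound
  have hWbound : ∀ (n : ℕ) (xs : Fin n → X) (ys : Fin n → Y),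
      (∏ i, P (xs i) (ys i)) ≤ (∏ i, q (xs i)) * Real.exp (-(∑ i, Z (xs i) (ys i))) := by
    intro n xs ys
    calc (∏ i, P (xs i) (ys i))
        ≤ ∏ i, q (xs i) * Real.exp (-(Z (xs i) (ys i))) :=
          Finset.prod_le_prod (fun i _ => hPnonneg _ _) (fun i _ => hPq _ _)
      _ = (∏ i, q (xs i)) * ∏ i, Real.exp (-(Z (xs i) (ys i))) := Finset.prod_mul_distrib
      _ = (∏ i, q (xs i)) * Real.exp (∑ i, -(Z (xs i) (ys i))) := by
          rw [Real.exp_sum]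
      _ = (∏ i, q (xs i)) * Real.exp (-(∑ i, Z (xs i) (ys i))) := by
          rw [Finset.sum_neg_distrib]
  -- key inequality
  have key : ∀ ε : ℝ, 0 < ε → ∀ n : ℕ, 1 ≤ n →
      cov n ≤ (n : ℝ) * σ2 / ((n * ε)^2)
        + Real.exp (-((n : ℝ) * (H - ε))) * E n := by
    intro ε hε n hn
    have hnpos : (0 : ℝ) < n := by exact_mod_cast hn
    have ht : (0 : ℝ) < (n : ℝ) * ε := mul_pos hnpos hε
    have step1 : ∀ (xs : Fin n → X) (ys : Fin n → Y),
        (∏ i, P (xs i) (ys i)) * (if ys ∈ Γ n xs then (1:ℝ) else 0)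
          ≤ (∏ i, P (xs i) (ys i)) *
              (if (∑ i, Z (xs i) (ys i)) - (n : ℝ) * H ≤ -((n : ℝ) * ε) then (1:ℝ) else 0)
            + (∏ i, q (xs i)) * Real.exp (-((n : ℝ) * (H - ε)))
              * (if ys ∈ Γ n xs then (1:ℝ) else 0) := by
      intro xs ys
      have hW0 : 0 ≤ ∏ i, P (xs i) (ys i) := Finset.prod_nonneg fun i _ => hPnonneg _ _
      have hQ0 : 0 ≤ ∏ i, q (xs i) := Finset.prod_nonneg fun i _ => hq0 _
      by_cases hbad : (∑ i, Z (xs i) (ys i)) - (n : ℝ) * H ≤ -((n : ℝ) * ε)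
      · rw [if_pos hbad]
        have h2 : 0 ≤ (∏ i, q (xs i)) * Real.exp (-((n : ℝ) * (H - ε)))
            * (if ys ∈ Γ n xs then (1:ℝ) else 0) := by
          apply mul_nonneg (mul_nonneg hQ0 (Real.exp_pos _).le)
          split_ifs <;> norm_num
        have h3 : (∏ i, P (xs i) (ys i)) * (if ys ∈ Γ n xs then (1:ℝ) else 0)
            ≤ (∏ i, P (xs i) (ys i)) * 1 := by
          apply mul_le_mul_of_nonneg_left _ hW0
          split_ifs <;> norm_num
        linarith
      · rw [if_neg hbad]
        rw [mul_zero, zero_add]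
        split_ifs with hmem
        · rw [mul_one, mul_one]
          have hS : -(∑ i, Z (xs i) (ys i)) ≤ -((n : ℝ) * (H - ε)) := by
            push_neg at hbad
            nlinarith
          calc (∏ i, P (xs i) (ys i))
              ≤ (∏ i, q (xs i)) * Real.exp (-(∑ i, Z (xs i) (ys i))) := hWbound n xs ys
            _ ≤ (∏ i, q (xs i)) * Real.exp (-((n : ℝ) * (H - ε))) :=
                mul_le_mul_of_nonneg_left (Real.exp_le_exp.2 hS) hQ0
        · rw [mul_zero, mul_zero]
    -- sum up
    rw [hcov]
    calc (∑ xs : Fin n → X, ∑ ys : Fin n → Y,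
            (∏ i, P (xs i) (ys i)) * (if ys ∈ Γ n xs then (1:ℝ) else 0))
        ≤ ∑ xs : Fin n → X, ∑ ys : Fin n → Y,
            ((∏ i, P (xs i) (ys i)) *
              (if (∑ i, Z (xs i) (ys i)) - (n : ℝ) * H ≤ -((n : ℝ) * ε) then (1:ℝ) else 0)
            + (∏ i, q (xs i)) * Real.exp (-((n : ℝ) * (H - ε)))
              * (if ys ∈ Γ n xs then (1:ℝ) else 0)) := by
          refine Finset.sum_le_sum fun xs _ => Finset.sum_le_sum fun ys _ => step1 xs ys
      _ = (∑ xs : Fin n → X, ∑ ys : Fin n → Y, (∏ i, P (xs i) (ys i)) *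
              (if (∑ i, Z (xs i) (ys i)) - (n : ℝ) * H ≤ -((n : ℝ) * ε) then (1:ℝ) else 0))
          + (∑ xs : Fin n → X, ∑ ys : Fin n → Y, (∏ i, q (xs i))
              * Real.exp (-((n : ℝ) * (H - ε))) * (if ys ∈ Γ n xs then (1:ℝ) else 0)) := by
          rw [← Finset.sum_add_distrib]
          refine Finset.sum_congr rfl fun xs _ => Finset.sum_add_distrib
      _ ≤ (n : ℝ) * σ2 / (((n : ℝ) * ε)^2) + Real.exp (-((n : ℝ) * (H - ε))) * E n := by
          refine add_le_add ?_ (le_of_eq ?_)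
          · -- Chebyshev part
            have hb := bridge n (fun xs ys => (∏ i, P (xs i) (ys i)) *
              (if (∑ i, Z (xs i) (ys i)) - (n : ℝ) * H ≤ -((n : ℝ) * ε) then (1:ℝ) else 0))
            rw [hb]
            have hconv : ∀ f : Fin n → X × Y,
                (∏ i, P ((f i).1) ((f i).2)) *
                  (if (∑ i, Z ((f i).1) ((f i).2)) - (n : ℝ) * H ≤ -((n : ℝ) * ε)
                    then (1:ℝ) else 0)
                  = (∏ k, w (f k)) *
                    (if (∑ i, g (f i)) ≤ -((n : ℝ) * ε) then (1:ℝ) else 0) := by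
              intro f
              have hsg : (∑ i, g (f i)) = (∑ i, Z ((f i).1) ((f i).2)) - (n : ℝ) * H := by
                simp only [hgd, Finset.sum_sub_distrib, Finset.sum_const, Finset.card_univ,
                  Fintype.card_fin, nsmul_eq_mul]
              rw [hsg]
            rw [Finset.sum_congr rfl (fun f _ => hconv f)]
            have hch := chebyshev_sum (n := n) w g hw0 hw1 hg0 ((n : ℝ) * ε) ht
            rw [← hσd] at hch
            exact hch
          · -- expectation part
            have hin : ∀ xs : Fin n → X,
                (∑ ys : Fin n → Y, (∏ i, q (xs i)) * Real.exp (-((n : ℝ) * (H - ε)))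
                  * (if ys ∈ Γ n xs then (1:ℝ) else 0))
                = Real.exp (-((n : ℝ) * (H - ε))) * ((∏ i, q (xs i)) * ((Γ n xs).card : ℝ)) := by
              intro xs
              rw [← Finset.mul_sum]
              rw [Finset.sum_boole, Finset.filter_univ_mem]
              ring
            rw [Finset.sum_congr rfl (fun xs _ => hin xs), ← Finset.mul_sum]
  -- nonnegativity facts
  have covnn : ∀ n, 0 ≤ cov n := by
    intro n; rw [hcov]
    refine Finset.sum_nonneg fun xs _ => Finset.sum_nonneg fun ys _ => ?_
    apply mul_nonneg (Finset.prod_nonneg fun i _ => hPnonneg _ _)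
    split_ifs <;> norm_num
  have hQn1 : ∀ n : ℕ, ∑ xs : Fin n → X, ∏ i, q (xs i) = 1 := by
    intro n
    have h := expect_prod_aux (A := X) (n := n) (fun _ x => q x)
    rw [h]
    simp [hPsum]
  have hEnn : ∀ n, 0 ≤ E n := by
    intro n
    simp only [hEd]
    exact Finset.sum_nonneg fun xs _ =>
      mul_nonneg (Finset.prod_nonneg fun i _ => hq0 _) (Nat.cast_nonneg _)
  -- Y is nonempty
  have hY : 1 ≤ Fintype.card Y := by
    rcases isEmpty_or_nonempty Y with hYe | hYn
    · exfalso
      have : ∀ x, q x = 0 := by intro x; simp [hqd]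
      rw [Finset.sum_congr rfl (fun x _ => this x)] at hPsum
      simp at hPsum
    · exact Fintype.card_pos
  -- T is eventually bounded above
  have hTbnd : ∀ᶠ n : ℕ in Filter.atTop, T n ≤ Real.log (Fintype.card Y) := by
    filter_upwards [Filter.eventually_ge_atTop 1] with n hn
    have hnpos : (0:ℝ) < n := by exact_mod_cast hn
    have hcard : ∀ xs : Fin n → X, ((Γ n xs).card : ℝ) ≤ ((Fintype.card Y : ℝ))^n := by
      intro xs
      have h1 : (Γ n xs).card ≤ Fintype.card (Fin n → Y) := Finset.card_le_univ _
      have h2 : Fintype.card (Fin n → Y) = Fintype.card Y ^ n := by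
        rw [Fintype.card_fun, Fintype.card_fin]
      calc ((Γ n xs).card : ℝ) ≤ (Fintype.card (Fin n → Y) : ℝ) := by exact_mod_cast h1
        _ = ((Fintype.card Y : ℝ))^n := by rw [h2]; push_cast; ring
    have hEle : E n ≤ ((Fintype.card Y : ℝ))^n := by
      simp only [hEd]
      calc (∑ xs : Fin n → X, (∏ i, q (xs i)) * ((Γ n xs).card : ℝ))
          ≤ ∑ xs : Fin n → X, (∏ i, q (xs i)) * ((Fintype.card Y : ℝ))^n :=
            Finset.sum_le_sum fun xs _ => mul_le_mul_of_nonneg_left (hcard xs)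
              (Finset.prod_nonneg fun i _ => hq0 _)
        _ = ((Fintype.card Y : ℝ))^n := by rw [← Finset.sum_mul, hQn1 n, one_mul]
    have hlogY : 0 ≤ Real.log (Fintype.card Y) := by
      apply Real.log_nonneg
      exact_mod_cast hY
    have hlogE : Real.log (E n) ≤ (n:ℝ) * Real.log (Fintype.card Y) := by
      rcases eq_or_lt_of_le (hEnn n) with h0 | hpos
      · rw [← h0, Real.log_zero]; positivity
      · calc Real.log (E n) ≤ Real.log (((Fintype.card Y : ℝ))^n) := Real.log_le_log hpos hEle
          _ = (n:ℝ) * Real.log (Fintype.card Y) := by rw [Real.log_pow]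
    simp only [hTd]
    rw [div_le_iff₀ hnpos]
    linarith
  have hTcob : Filter.IsCoboundedUnder (· ≥ ·) Filter.atTop T :=
    Filter.isCoboundedUnder_ge_of_eventually_le Filter.atTop hTbnd
  have hcovbdd : Filter.IsBoundedUnder (· ≥ ·) Filter.atTop cov :=
    ⟨0, Filter.eventually_map.2 (Filter.Eventually.of_forall covnn)⟩
  set c := Filter.liminf (fun n => cov n) Filter.atTop with hcd
  have hc : 0 < c := hconf
  have Ecov : ∀ᶠ n : ℕ in Filter.atTop, c/2 < cov n := by
    have : c/2 < Filter.liminf (fun n => cov n) Filter.atTop := by rw [← hcd]; linarith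
    exact Filter.eventually_lt_of_lt_liminf this hcovbdd
  -- main ε-step
  have main : ∀ ε : ℝ, 0 < ε → H - ε ≤ Filter.liminf T Filter.atTop := by
    intro ε hε
    have hδ : 0 < ε/2 := by positivity
    refine Filter.le_liminf_of_le hTcob ?_
    have E2 : ∀ᶠ n : ℕ in Filter.atTop, σ2/(ε/2)^2/(n:ℝ) < c/4 :=
      (tendsto_const_div_atTop_nhds_zero_nat (σ2/(ε/2)^2)).eventually
        (gt_mem_nhds (by positivity))
    have E3 : ∀ᶠ n : ℕ in Filter.atTop, |Real.log (c/4)|/(n:ℝ) < ε/2 :=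
      (tendsto_const_div_atTop_nhds_zero_nat |Real.log (c/4)|).eventually (gt_mem_nhds hδ)
    filter_upwards [Ecov, E2, E3, Filter.eventually_ge_atTop 1] with n h1 h2 h3 h4
    have hnpos : (0:ℝ) < n := by exact_mod_cast h4
    have hkey := key (ε/2) hδ n h4
    have hrw : (n:ℝ) * σ2 / (((n:ℝ)*(ε/2))^2) = σ2/(ε/2)^2/(n:ℝ) := by
      field_simp
    rw [hrw] at hkey
    have h5 : c/4 ≤ Real.exp (-((n:ℝ)*(H-ε/2))) * E n := by linarith
    have h6 : c/4 * Real.exp ((n:ℝ)*(H-ε/2)) ≤ E n := by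
      have hm := mul_le_mul_of_nonneg_right h5 (Real.exp_pos ((n:ℝ)*(H-ε/2))).le
      calc c/4 * Real.exp ((n:ℝ)*(H-ε/2))
          ≤ Real.exp (-((n:ℝ)*(H-ε/2))) * E n * Real.exp ((n:ℝ)*(H-ε/2)) := hm
        _ = E n * (Real.exp (-((n:ℝ)*(H-ε/2))) * Real.exp ((n:ℝ)*(H-ε/2))) := by ring
        _ = E n := by rw [← Real.exp_add]; simp
    have hEpos : 0 < E n := lt_of_lt_of_le (by positivity) h6
    have h7 : Real.log (c/4) + (n:ℝ)*(H-ε/2) ≤ Real.log (E n) := by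
      have hlm : Real.log (c/4 * Real.exp ((n:ℝ)*(H-ε/2)))
          = Real.log (c/4) + (n:ℝ)*(H-ε/2) := by
        rw [Real.log_mul (by positivity) (Real.exp_ne_zero _), Real.log_exp]
      rw [← hlm]
      exact Real.log_le_log (by positivity) h6
    have h8 : -(ε/2) ≤ Real.log (c/4)/(n:ℝ) := by
      have habs : -(|Real.log (c/4)|/(n:ℝ)) ≤ Real.log (c/4)/(n:ℝ) := by
        rw [← neg_div]
        exact div_le_div_of_nonneg_right (neg_abs_le _) hnpos.le
      linarith
    have h9 : (Real.log (c/4) + (n:ℝ)*(H-ε/2))/(n:ℝ) ≤ Real.log (E n)/(n:ℝ) :=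
      div_le_div_of_nonneg_right h7 hnpos.le
    have h10 : (Real.log (c/4) + (n:ℝ)*(H-ε/2))/(n:ℝ) = Real.log (c/4)/(n:ℝ) + (H-ε/2) := by
      field_simp
    simp only [hTd]
    calc H - ε = -(ε/2) + (H - ε/2) := by ring
      _ ≤ Real.log (c/4)/(n:ℝ) + (H-ε/2) := by linarith
      _ = (Real.log (c/4) + (n:ℝ)*(H-ε/2))/(n:ℝ) := h10.symm
      _ ≤ Real.log (E n)/(n:ℝ) := h9
  -- conclude
  by_contra hlt
  push_neg at hlt
  have hmain := main ((H - Filter.liminf T Filter.atTop)/2) (by linarith)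
  linarith
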